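/- Let R and S be rings, E an R-S-bimodule, and I an injective left R-module. Then the left S-module Hom_R(E,I) is cotorsion, i.e., Ext^1_S(F, Hom_R(E,I)) = 0 for every flat left S-module F. -/

import Mathlib

open CategoryTheory TensorProduct

universe u

set_option maxHeartbeats 1000000
noncomputable section

namespace NCT

variable (R : Type u) [Ring R]

/-- The subgroup of relations defining the balanced tensor product `M ⊗_R N`
of a right `R`-module `M` and a left `R`-module `N`. -/
def rel (M N : Type u) [AddCommGroup M] [Module Rᵐᵒᵖ M] [AddCommGroup N] [Module R N] :
    AddSubgroup (M ⊗[ℤ] N) :=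
  AddSubgroup.closure {x | ∃ (r : R) (m : M) (n : N),
    x = (MulOpposite.op r • m) ⊗ₜ[ℤ] n - m ⊗ₜ[ℤ] (r • n)}

/-- The balanced tensor product `M ⊗_R N` over a (possibly noncommutative) ring `R`. -/
def Tens (M N : Type u) [AddCommGroup M] [Module Rᵐᵒᵖ M] [AddCommGroup N] [Module R N] :
    Type u :=
  (M ⊗[ℤ] N) ⧸ rel R M N

instance (M N : Type u) [AddCommGroup M] [Module Rᵐᵒᵖ M] [AddCommGroup N] [Module R N] :
    AddCommGroup (Tens R M N) :=
  inferInstanceAs (AddCommGroup ((M ⊗[ℤ] N) ⧸ rel R M N))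

variable {R}

variable {M M' M'' N N' N'' : Type u}
  [AddCommGroup M] [Module Rᵐᵒᵖ M] [AddCommGroup M'] [Module Rᵐᵒᵖ M']
  [AddCommGroup M''] [Module Rᵐᵒᵖ M'']
  [AddCommGroup N] [Module R N] [AddCommGroup N'] [Module R N']
  [AddCommGroup N''] [Module R N'']

/-- The canonical projection. -/
def mk : M ⊗[ℤ] N →+ Tens R M N := QuotientAddGroup.mk' (rel R M N)

lemma mk_surjective : Function.Surjective (mk (R := R) (M := M) (N := N)) :=
  QuotientAddGroup.mk'_surjective _

private def intMap (f : M →ₗ[Rᵐᵒᵖ] M') (g : N →ₗ[R] N') : M ⊗[ℤ] N →ₗ[ℤ] M' ⊗[ℤ] N' :=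
  TensorProduct.map f.toAddMonoidHom.toIntLinearMap g.toAddMonoidHom.toIntLinearMap

private lemma intMap_id :
    intMap (LinearMap.id : M →ₗ[Rᵐᵒᵖ] M) (LinearMap.id : N →ₗ[R] N) = LinearMap.id :=
  TensorProduct.ext' fun _ _ => rfl

private lemma intMap_comp (f' : M' →ₗ[Rᵐᵒᵖ] M'') (f : M →ₗ[Rᵐᵒᵖ] M')
    (g' : N' →ₗ[R] N'') (g : N →ₗ[R] N') :
    intMap (f'.comp f) (g'.comp g) = (intMap f' g').comp (intMap f g) :=
  TensorProduct.ext' fun _ _ => rfl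

private lemma rel_le (f : M →ₗ[Rᵐᵒᵖ] M') (g : N →ₗ[R] N') :
    rel R M N ≤ (rel R M' N').comap (intMap f g).toAddMonoidHom := by
  rw [rel, AddSubgroup.closure_le]
  rintro x ⟨r, m, n, rfl⟩
  simp only [SetLike.mem_coe, AddSubgroup.mem_comap, LinearMap.toAddMonoidHom_coe, map_sub]
  apply AddSubgroup.subset_closure
  refine ⟨r, f m, g n, ?_⟩
  simp [intMap, f.map_smul, g.map_smul]
  show (f (MulOpposite.op r • m)) ⊗ₜ[ℤ] g n - f m ⊗ₜ[ℤ] g (r • n) = _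
  rw [f.map_smul, g.map_smul]

/-- Functoriality of the balanced tensor product. -/
def tmap (f : M →ₗ[Rᵐᵒᵖ] M') (g : N →ₗ[R] N') : Tens R M N →+ Tens R M' N' :=
  QuotientAddGroup.map _ _ (intMap f g).toAddMonoidHom (rel_le f g)

lemma tmap_mk (f : M →ₗ[Rᵐᵒᵖ] M') (g : N →ₗ[R] N') (x : M ⊗[ℤ] N) :
    tmap f g (mk x) = mk (intMap f g x) := rfl

lemma tmap_id_apply (x : Tens R M N) :
    tmap (LinearMap.id : M →ₗ[Rᵐᵒᵖ] M) (LinearMap.id : N →ₗ[R] N) x = x := by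
  obtain ⟨y, rfl⟩ := mk_surjective x
  rw [tmap_mk, intMap_id]
  rfl

lemma tmap_tmap (f' : M' →ₗ[Rᵐᵒᵖ] M'') (f : M →ₗ[Rᵐᵒᵖ] M')
    (g' : N' →ₗ[R] N'') (g : N →ₗ[R] N') (x : Tens R M N) :
    tmap f' g' (tmap f g x) = tmap (f'.comp f) (g'.comp g) x := by
  obtain ⟨y, rfl⟩ := mk_surjective x
  rw [tmap_mk, tmap_mk, tmap_mk, intMap_comp]
  rfl

lemma tmap_add_left (f₁ f₂ : M →ₗ[Rᵐᵒᵖ] M') (g : N →ₗ[R] N') :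
    tmap (f₁ + f₂) g = tmap f₁ g + tmap f₂ g := by
  ext x
  obtain ⟨y, rfl⟩ := mk_surjective x
  have h : intMap (f₁ + f₂) g = intMap f₁ g + intMap f₂ g := by
    apply TensorProduct.ext'
    intro m n
    simp [intMap, add_tmul]
    show (f₁ + f₂) m ⊗ₜ[ℤ] g n = f₁ m ⊗ₜ[ℤ] g n + f₂ m ⊗ₜ[ℤ] g n
    rw [LinearMap.add_apply, add_tmul]
  simp only [AddMonoidHom.add_apply, tmap_mk, h, LinearMap.add_apply]
  rw [map_add]

lemma tmap_add_right (f : M →ₗ[Rᵐᵒᵖ] M') (g₁ g₂ : N →ₗ[R] N') :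
    tmap f (g₁ + g₂) = tmap f g₁ + tmap f g₂ := by
  ext x
  obtain ⟨y, rfl⟩ := mk_surjective x
  have h : intMap f (g₁ + g₂) = intMap f g₁ + intMap f g₂ := by
    apply TensorProduct.ext'
    intro m n
    simp [intMap, tmul_add]
    show f m ⊗ₜ[ℤ] (g₁ + g₂) n = f m ⊗ₜ[ℤ] g₁ n + f m ⊗ₜ[ℤ] g₂ n
    rw [LinearMap.add_apply, tmul_add]
  simp only [AddMonoidHom.add_apply, tmap_mk, h, LinearMap.add_apply]
  rw [map_add]


lemma tmap_zero_left (g : N →ₗ[R] N') :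
    tmap (0 : M →ₗ[Rᵐᵒᵖ] M') g = 0 := by
  ext x
  obtain ⟨y, rfl⟩ := mk_surjective x
  have h : intMap (0 : M →ₗ[Rᵐᵒᵖ] M') g = 0 := by
    apply TensorProduct.ext'
    intro m n
    simp [intMap]
    show (0 : M →ₗ[Rᵐᵒᵖ] M') m ⊗ₜ[ℤ] g n = 0
    rw [LinearMap.zero_apply, zero_tmul]
  rw [tmap_mk, h]
  rfl

lemma tmap_zero_right (f : M →ₗ[Rᵐᵒᵖ] M') :
    tmap f (0 : N →ₗ[R] N') = 0 := by
  ext x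
  obtain ⟨y, rfl⟩ := mk_surjective x
  have h : intMap f (0 : N →ₗ[R] N') = 0 := by
    apply TensorProduct.ext'
    intro m n
    simp [intMap]
    show f m ⊗ₜ[ℤ] (0 : N →ₗ[R] N') n = 0
    rw [LinearMap.zero_apply, tmul_zero]
  rw [tmap_mk, h]
  rfl

variable (R)

/-- The balanced tensor product, as a bifunctor on module categories. -/
def tensorBifunctor : ModuleCat.{u} Rᵐᵒᵖ ⥤ ModuleCat.{u} R ⥤ AddCommGrpCat.{u} where
  obj M :=
    { obj := fun N => AddCommGrpCat.of (Tens R M N)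
      map := fun g => AddCommGrpCat.ofHom (tmap LinearMap.id g.hom)
      map_id := fun N => by
        ext x
        exact tmap_id_apply x
      map_comp := fun g g' => by
        ext x
        show tmap LinearMap.id (LinearMap.comp g'.hom g.hom) x
          = tmap LinearMap.id g'.hom (tmap LinearMap.id g.hom x)
        rw [tmap_tmap, LinearMap.id_comp] }
  map f :=
    { app := fun N => AddCommGrpCat.ofHom (tmap f.hom LinearMap.id)
      naturality := fun N N' g => by
        ext x
        show tmap f.hom LinearMap.id (tmap LinearMap.id g.hom x)
          = tmap LinearMap.id g.hom (tmap f.hom LinearMap.id x)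
        rw [tmap_tmap, tmap_tmap, LinearMap.id_comp, LinearMap.comp_id,
          LinearMap.id_comp, LinearMap.comp_id] }
  map_id := fun M => by
    ext N x
    exact tmap_id_apply x
  map_comp := fun f f' => by
    ext N x
    show tmap (LinearMap.comp f'.hom f.hom) LinearMap.id x
      = tmap f'.hom LinearMap.id (tmap f.hom LinearMap.id x)
    rw [tmap_tmap, LinearMap.id_comp]

instance (M : ModuleCat.{u} Rᵐᵒᵖ) : ((tensorBifunctor R).obj M).Additive where
  map_add := by
    intro N N' g g'
    ext x
    show tmap LinearMap.id (g.hom + g'.hom) x = _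
    rw [tmap_add_right]
    rfl

instance (N : ModuleCat.{u} R) : ((tensorBifunctor R).flip.obj N).Additive where
  map_add := by
    intro M M' f f'
    ext x
    show tmap (f.hom + f'.hom) LinearMap.id x = _
    rw [tmap_add_left]
    rfl


instance : (tensorBifunctor R).PreservesZeroMorphisms where
  map_zero := by
    intro M M'
    ext N x
    show tmap (0 : ↑M →ₗ[Rᵐᵒᵖ] ↑M') LinearMap.id x = 0
    rw [tmap_zero_left]
    rfl

/-- A right `R`-module `M` is flat if `M ⊗_R -` preserves injectivity. -/
def FlatRight (M : Type u) [AddCommGroup M] [Module Rᵐᵒᵖ M] : Prop :=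
  ∀ (N N' : Type u) [AddCommGroup N] [Module R N] [AddCommGroup N'] [Module R N']
    (g : N →ₗ[R] N'), Function.Injective g →
      Function.Injective (tmap (LinearMap.id : M →ₗ[Rᵐᵒᵖ] M) g)

/-- A left `R`-module `N` is flat if `- ⊗_R N` preserves injectivity. -/
def FlatLeft (N : Type u) [AddCommGroup N] [Module R N] : Prop :=
  ∀ (M M' : Type u) [AddCommGroup M] [Module Rᵐᵒᵖ M] [AddCommGroup M'] [Module Rᵐᵒᵖ M']
    (f : M →ₗ[Rᵐᵒᵖ] M'), Function.Injective f →
      Function.Injective (tmap f (LinearMap.id : N →ₗ[R] N))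

end NCT

open CategoryTheory Opposite

section

variable (R : Type u) [Ring R] (S : Type u) [Ring S]
variable (E : Type u) [AddCommGroup E] [Module R E] [Module Sᵐᵒᵖ E] [SMulCommClass R Sᵐᵒᵖ E]

/-- Right multiplication by `s ∈ S` on an `R`-`S`-bimodule `E`, as an `R`-linear map. -/
def rightMulLin (s : Sᵐᵒᵖ) : E →ₗ[R] E where
  toFun e := s • e
  map_add' := smul_add s
  map_smul' r e := (smul_comm r s e).symm

variable (J : Type u) [AddCommGroup J] [Module R J]

/-- The left `S`-module structure on `Hom_R(E, J)` induced by the right `S`-module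
structure on the `R`-`S`-bimodule `E`: `(s • f) e = f (e • s)`. -/
instance homLeftModule : Module S (E →ₗ[R] J) where
  smul s f := f.comp (rightMulLin R S E (MulOpposite.op s))
  one_smul f := by
    ext e
    show f ((MulOpposite.op (1 : S)) • e) = f e
    rw [MulOpposite.op_one, one_smul]
  mul_smul s t f := by
    ext e
    show f ((MulOpposite.op (s * t)) • e) = f (MulOpposite.op t • MulOpposite.op s • e)
    rw [MulOpposite.op_mul, mul_smul]
  smul_zero s := by ext e; rfl
  smul_add s f g := by ext e; rfl
  add_smul s t f := by
    ext e
    show f ((MulOpposite.op (s + t)) • e) = f (MulOpposite.op s • e) + f (MulOpposite.op t • e)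
    rw [← map_add, MulOpposite.op_add, add_smul]
  zero_smul f := by
    ext e
    show f ((MulOpposite.op (0 : S)) • e) = 0
    rw [MulOpposite.op_zero, zero_smul, map_zero]

end

namespace NCT

section Aux

variable {R : Type u} [Ring R]
variable {M M' M'' N N' N'' : Type u}
  [AddCommGroup M] [Module Rᵐᵒᵖ M] [AddCommGroup M'] [Module Rᵐᵒᵖ M']
  [AddCommGroup M''] [Module Rᵐᵒᵖ M'']
  [AddCommGroup N] [Module R N] [AddCommGroup N'] [Module R N']
  [AddCommGroup N''] [Module R N'']

lemma mk_eq_zero_iff {x : M ⊗[ℤ] N} : (mk x : Tens R M N) = 0 ↔ x ∈ rel R M N :=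
  QuotientAddGroup.eq_zero_iff x

lemma mk_rel (r : R) (m : M) (n : N) :
    (mk ((MulOpposite.op r • m) ⊗ₜ[ℤ] n) : Tens R M N) = mk (m ⊗ₜ[ℤ] (r • n)) := by
  rw [← sub_eq_zero, ← map_sub, mk_eq_zero_iff]
  exact AddSubgroup.subset_closure ⟨r, m, n, rfl⟩

lemma tmap_comm (f : M →ₗ[Rᵐᵒᵖ] M') (g : N →ₗ[R] N') (x : Tens R M N) :
    tmap f LinearMap.id (tmap LinearMap.id g x)
      = tmap LinearMap.id g (tmap f LinearMap.id x) := by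
  rw [tmap_tmap, tmap_tmap, LinearMap.comp_id, LinearMap.id_comp, LinearMap.comp_id,
    LinearMap.id_comp]

private lemma exact_int' {A : Type u} [Ring A] {X Y Z : Type u} [AddCommGroup X] [Module A X]
    [AddCommGroup Y] [Module A Y] [AddCommGroup Z] [Module A Z]
    (f : X →ₗ[A] Y) (g : Y →ₗ[A] Z) (h : Function.Exact f g) :
    Function.Exact f.toAddMonoidHom.toIntLinearMap g.toAddMonoidHom.toIntLinearMap :=
  fun y => by simpa using h y

lemma tmap_surjective (f : M →ₗ[Rᵐᵒᵖ] M') (g : N →ₗ[R] N')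
    (hf : Function.Surjective f) (hg : Function.Surjective g) :
    Function.Surjective (tmap f g) := by
  intro y
  obtain ⟨x, rfl⟩ := mk_surjective y
  have hs : Function.Surjective
      (TensorProduct.map f.toAddMonoidHom.toIntLinearMap g.toAddMonoidHom.toIntLinearMap) :=
    TensorProduct.map_surjective (by simpa using hf) (by simpa using hg)
  obtain ⟨z, hz⟩ := hs x
  exact ⟨mk z, by rw [tmap_mk]; exact congrArg _ hz⟩

lemma tmap_exact_left (ι : M →ₗ[Rᵐᵒᵖ] M') (π : M' →ₗ[Rᵐᵒᵖ] M'')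
    (hex : Function.Exact ι π) (hπ : Function.Surjective π)
    (y : Tens R M' N) (hy : tmap π (LinearMap.id : N →ₗ[R] N) y = 0) :
    ∃ z : Tens R M N, tmap ι LinearMap.id z = y := by
  obtain ⟨x, rfl⟩ := mk_surjective y
  rw [tmap_mk, mk_eq_zero_iff] at hy
  have hmap : rel R M'' N ≤ AddSubgroup.map
      (intMap π (LinearMap.id : N →ₗ[R] N)).toAddMonoidHom (rel R M' N) := by
    rw [rel, AddSubgroup.closure_le]
    rintro _ ⟨r, m, n, rfl⟩
    obtain ⟨m', rfl⟩ := hπ m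
    refine ⟨(MulOpposite.op r • m') ⊗ₜ[ℤ] n - m' ⊗ₜ[ℤ] (r • n),
      AddSubgroup.subset_closure ⟨r, m', n, rfl⟩, ?_⟩
    simp [intMap, π.map_smul]
    show (π (MulOpposite.op r • m')) ⊗ₜ[ℤ] n - π m' ⊗ₜ[ℤ] (r • n) = _
    rw [π.map_smul]
  obtain ⟨y₀, hy₀, he⟩ := hmap hy
  replace he : intMap π (LinearMap.id : N →ₗ[R] N) y₀
      = intMap π (LinearMap.id : N →ₗ[R] N) x := he
  have hker : intMap π (LinearMap.id : N →ₗ[R] N) (x - y₀) = 0 := by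
    rw [map_sub, he, sub_self]
  have hrT : intMap π (LinearMap.id : N →ₗ[R] N)
      = LinearMap.rTensor N π.toAddMonoidHom.toIntLinearMap := TensorProduct.ext' fun _ _ => rfl
  have hrT' : intMap ι (LinearMap.id : N →ₗ[R] N)
      = LinearMap.rTensor N ι.toAddMonoidHom.toIntLinearMap := TensorProduct.ext' fun _ _ => rfl
  rw [hrT] at hker
  obtain ⟨z₀, hz₀⟩ := (rTensor_exact N (exact_int' ι π hex) (by simpa using hπ) (x - y₀)).mp hker
  refine ⟨mk z₀, ?_⟩
  rw [tmap_mk, hrT']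
  refine (congrArg mk hz₀).trans ?_
  rw [map_sub, mk_eq_zero_iff.mpr hy₀, sub_zero]

lemma tmap_exact_right (g : N →ₗ[R] N') (g' : N' →ₗ[R] N'')
    (hex : Function.Exact g g') (hg' : Function.Surjective g')
    (y : Tens R M N') (hy : tmap (LinearMap.id : M →ₗ[Rᵐᵒᵖ] M) g' y = 0) :
    ∃ z : Tens R M N, tmap LinearMap.id g z = y := by
  obtain ⟨x, rfl⟩ := mk_surjective y
  rw [tmap_mk, mk_eq_zero_iff] at hy
  have hmap : rel R M N'' ≤ AddSubgroup.map
      (intMap (LinearMap.id : M →ₗ[Rᵐᵒᵖ] M) g').toAddMonoidHom (rel R M N') := by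
    rw [rel, AddSubgroup.closure_le]
    rintro _ ⟨r, m, n, rfl⟩
    obtain ⟨n', rfl⟩ := hg' n
    refine ⟨(MulOpposite.op r • m) ⊗ₜ[ℤ] n' - m ⊗ₜ[ℤ] (r • n'),
      AddSubgroup.subset_closure ⟨r, m, n', rfl⟩, ?_⟩
    simp [intMap, g'.map_smul]
    show (MulOpposite.op r • m) ⊗ₜ[ℤ] g' n' - m ⊗ₜ[ℤ] g' (r • n') = _
    rw [g'.map_smul]
  obtain ⟨y₀, hy₀, he⟩ := hmap hy
  replace he : intMap (LinearMap.id : M →ₗ[Rᵐᵒᵖ] M) g' y₀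
      = intMap (LinearMap.id : M →ₗ[Rᵐᵒᵖ] M) g' x := he
  have hker : intMap (LinearMap.id : M →ₗ[Rᵐᵒᵖ] M) g' (x - y₀) = 0 := by
    rw [map_sub, he, sub_self]
  have hrT : intMap (LinearMap.id : M →ₗ[Rᵐᵒᵖ] M) g'
      = LinearMap.lTensor M g'.toAddMonoidHom.toIntLinearMap := TensorProduct.ext' fun _ _ => rfl
  have hrT' : intMap (LinearMap.id : M →ₗ[Rᵐᵒᵖ] M) g
      = LinearMap.lTensor M g.toAddMonoidHom.toIntLinearMap := TensorProduct.ext' fun _ _ => rfl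
  rw [hrT] at hker
  obtain ⟨z₀, hz₀⟩ := (lTensor_exact M (exact_int' g g' hex) (by simpa using hg') (x - y₀)).mp hker
  refine ⟨mk z₀, ?_⟩
  rw [tmap_mk, hrT']
  refine (congrArg mk hz₀).trans ?_
  rw [map_sub, mk_eq_zero_iff.mpr hy₀, sub_zero]

lemma flatLeft_of_equiv {N₁ N₂ : Type u} [AddCommGroup N₁] [Module R N₁]
    [AddCommGroup N₂] [Module R N₂] (e : N₁ ≃ₗ[R] N₂) (h : FlatLeft R N₁) :
    FlatLeft R N₂ := by
  intro M₁ M₂ _ _ _ _ f hf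
  have key : ∀ (P : Type u) [AddCommGroup P] [Module Rᵐᵒᵖ P],
      Function.Bijective (tmap (LinearMap.id : P →ₗ[Rᵐᵒᵖ] P) e.toLinearMap) := by
    intro P _ _
    have h2 : e.symm.toLinearMap.comp e.toLinearMap = (LinearMap.id : N₁ →ₗ[R] N₁) := by
      ext n; simp
    have h3 : e.toLinearMap.comp e.symm.toLinearMap = (LinearMap.id : N₂ →ₗ[R] N₂) := by
      ext n; simp
    have hli : Function.LeftInverse (tmap (LinearMap.id : P →ₗ[Rᵐᵒᵖ] P) e.symm.toLinearMap)
        (tmap (LinearMap.id : P →ₗ[Rᵐᵒᵖ] P) e.toLinearMap) := fun x => by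
      rw [tmap_tmap, LinearMap.id_comp, h2]
      exact tmap_id_apply x
    have hri : Function.RightInverse (tmap (LinearMap.id : P →ₗ[Rᵐᵒᵖ] P) e.symm.toLinearMap)
        (tmap (LinearMap.id : P →ₗ[Rᵐᵒᵖ] P) e.toLinearMap) := fun x => by
      rw [tmap_tmap, LinearMap.id_comp, h3]
      exact tmap_id_apply x
    exact ⟨hli.injective, hri.surjective⟩
  intro a b hab
  obtain ⟨a', rfl⟩ := (key M₁).2 a
  obtain ⟨b', rfl⟩ := (key M₁).2 b
  rw [tmap_comm, tmap_comm] at hab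
  have := h M₁ M₂ f hf ((key M₂).1 hab)
  rw [this]

end Aux

section Free

variable {R : Type u} [Ring R] {ι : Type u}
variable {N N' : Type u} [AddCommGroup N] [Module R N] [AddCommGroup N'] [Module R N']

variable (R ι N) in
private def finBil : (ι →₀ Rᵐᵒᵖ) →ₗ[ℤ] N →ₗ[ℤ] (ι →₀ N) where
  toFun f :=
    { toFun := fun n => f.mapRange (fun s => s.unop • n) (by simp)
      map_add' := fun a b => by ext i; simp [Finsupp.mapRange_apply, smul_add]
      map_smul' := fun z a => by
        ext i
        simp only [Finsupp.mapRange_apply, RingHom.id_apply, Finsupp.coe_smul, Pi.smul_apply]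
        rw [smul_comm] }
  map_add' f f' := by
    ext n i
    simp only [Finsupp.mapRange_apply, LinearMap.coe_mk, AddHom.coe_mk, LinearMap.add_apply,
      Finsupp.coe_add, Pi.add_apply, Finsupp.add_apply]
    rw [MulOpposite.unop_add, add_smul]
  map_smul' z f := by
    ext n i
    simp only [Finsupp.mapRange_apply, LinearMap.coe_mk, AddHom.coe_mk, RingHom.id_apply,
      LinearMap.smul_apply, Finsupp.coe_smul, Pi.smul_apply, Finsupp.smul_apply]
    rw [MulOpposite.unop_smul, smul_assoc]

variable (R ι N) in
private def tfwd : (ι →₀ Rᵐᵒᵖ) ⊗[ℤ] N →ₗ[ℤ] (ι →₀ N) := TensorProduct.lift (finBil R ι N)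

private lemma tfwd_tmul (f : ι →₀ Rᵐᵒᵖ) (n : N) :
    tfwd R ι N (f ⊗ₜ[ℤ] n) = f.mapRange (fun s => s.unop • n) (by simp) := rfl

private lemma tfwd_rel : ∀ x ∈ rel R (ι →₀ Rᵐᵒᵖ) N, (tfwd R ι N).toAddMonoidHom x = 0 := by
  have hle : rel R (ι →₀ Rᵐᵒᵖ) N ≤ (tfwd R ι N).toAddMonoidHom.ker := by
    rw [rel, AddSubgroup.closure_le]
    rintro _ ⟨r, m, n, rfl⟩
    simp only [SetLike.mem_coe, AddMonoidHom.mem_ker, map_sub, LinearMap.toAddMonoidHom_coe]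
    rw [sub_eq_zero, tfwd_tmul, tfwd_tmul]
    ext i
    simp only [Finsupp.mapRange_apply, Finsupp.smul_apply]
    rw [smul_eq_mul, MulOpposite.unop_mul, MulOpposite.unop_op, mul_smul]
  exact fun x hx => AddMonoidHom.mem_ker.mp (hle hx)

variable (R ι N) in
private def toFinsupp : Tens R (ι →₀ Rᵐᵒᵖ) N →+ (ι →₀ N) :=
  QuotientAddGroup.lift _ (tfwd R ι N).toAddMonoidHom tfwd_rel

private lemma toFinsupp_mk (x : (ι →₀ Rᵐᵒᵖ) ⊗[ℤ] N) :
    toFinsupp R ι N (mk x) = tfwd R ι N x := rfl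

variable (R ι N) in
private def ofFinsupp : (ι →₀ N) →+ Tens R (ι →₀ Rᵐᵒᵖ) N :=
  Finsupp.liftAddHom fun i =>
    (mk).comp (((TensorProduct.mk ℤ (ι →₀ Rᵐᵒᵖ) N) (Finsupp.single i 1)).toAddMonoidHom)

private lemma ofFinsupp_single (i : ι) (n : N) :
    ofFinsupp R ι N (Finsupp.single i n) = mk (Finsupp.single i (1 : Rᵐᵒᵖ) ⊗ₜ[ℤ] n) := by
  simp [ofFinsupp]

private lemma ofFinsupp_toFinsupp (x : Tens R (ι →₀ Rᵐᵒᵖ) N) :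
    ofFinsupp R ι N (toFinsupp R ι N x) = x := by
  obtain ⟨t, rfl⟩ := mk_surjective x
  induction t using TensorProduct.induction_on with
  | zero => simp
  | add a b ha hb => rw [map_add, map_add, map_add, ha, hb]
  | tmul f n =>
    rw [toFinsupp_mk]
    induction f using Finsupp.induction_linear with
    | zero => rw [TensorProduct.zero_tmul, map_zero, map_zero]; exact (map_zero _).symm
    | add a b ha hb =>
      rw [TensorProduct.add_tmul, map_add, map_add, ha, hb, ← map_add, ← TensorProduct.add_tmul]
    | single i s =>
      have h1 : tfwd R ι N (Finsupp.single i s ⊗ₜ[ℤ] n) = Finsupp.single i (s.unop • n) := by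
        rw [tfwd_tmul]
        ext j
        simp only [Finsupp.mapRange_apply]
        by_cases hij : i = j
        · subst hij; simp
        · simp [Finsupp.single_apply, hij]
      rw [h1, ofFinsupp_single]
      have h2 : MulOpposite.op s.unop • Finsupp.single i (1 : Rᵐᵒᵖ) = Finsupp.single i s := by
        rw [Finsupp.smul_single, smul_eq_mul, mul_one, MulOpposite.op_unop]
      rw [← h2, mk_rel]

private lemma toFinsupp_tmap (g : N →ₗ[R] N') (x : Tens R (ι →₀ Rᵐᵒᵖ) N) :
    toFinsupp R ι N' (tmap (LinearMap.id : (ι →₀ Rᵐᵒᵖ) →ₗ[Rᵐᵒᵖ] (ι →₀ Rᵐᵒᵖ)) g x)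
      = Finsupp.mapRange.addMonoidHom g.toAddMonoidHom (toFinsupp R ι N x) := by
  obtain ⟨t, rfl⟩ := mk_surjective x
  rw [tmap_mk, toFinsupp_mk, toFinsupp_mk]
  induction t using TensorProduct.induction_on with
  | zero => simp
  | add a b ha hb => rw [map_add, map_add, map_add, ha, hb, map_add]
  | tmul f n =>
    have h1 : intMap (LinearMap.id : (ι →₀ Rᵐᵒᵖ) →ₗ[Rᵐᵒᵖ] (ι →₀ Rᵐᵒᵖ)) g (f ⊗ₜ[ℤ] n)
        = f ⊗ₜ[ℤ] (g n) := by
      rfl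
    rw [h1, tfwd_tmul, tfwd_tmul]
    ext i
    simp [Finsupp.mapRange_apply, map_smul]

private lemma free_tmap_injective (g : N →ₗ[R] N') (hg : Function.Injective g) :
    Function.Injective
      (tmap (LinearMap.id : (ι →₀ Rᵐᵒᵖ) →ₗ[Rᵐᵒᵖ] (ι →₀ Rᵐᵒᵖ)) g :
        Tens R (ι →₀ Rᵐᵒᵖ) N → Tens R (ι →₀ Rᵐᵒᵖ) N') := by
  intro a b hab
  have h3 : Finsupp.mapRange.addMonoidHom g.toAddMonoidHom (toFinsupp R ι N a)
      = Finsupp.mapRange.addMonoidHom g.toAddMonoidHom (toFinsupp R ι N b) := by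
    rw [← toFinsupp_tmap, ← toFinsupp_tmap, hab]
  have h2 : toFinsupp R ι N a = toFinsupp R ι N b := by
    ext i
    have h4 := congrArg (fun z => z i) h3
    simp only [Finsupp.mapRange.addMonoidHom_apply, Finsupp.mapRange_apply,
      LinearMap.toAddMonoidHom_coe] at h4
    exact hg h4
  calc a = ofFinsupp R ι N (toFinsupp R ι N a) := (ofFinsupp_toFinsupp a).symm
    _ = ofFinsupp R ι N (toFinsupp R ι N b) := by rw [h2]
    _ = b := ofFinsupp_toFinsupp b

end Free

section Chase

variable {R : Type u} [Ring R]

private lemma flatRight_finsupp {ι : Type u} : FlatRight R (ι →₀ Rᵐᵒᵖ) :=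
  fun _ _ _ _ _ _ g hg => free_tmap_injective g hg

private lemma exact_subtype_ker' {A : Type u} [Ring A] {X Y : Type u} [AddCommGroup X]
    [Module A X] [AddCommGroup Y] [Module A Y] (f : X →ₗ[A] Y) :
    Function.Exact (LinearMap.ker f).subtype f := by
  intro y
  constructor
  · intro hy; exact ⟨⟨y, hy⟩, rfl⟩
  · rintro ⟨⟨x, hx⟩, rfl⟩; exact hx

private theorem chase_aux {P F : Type u} [AddCommGroup P] [Module R P]
    [AddCommGroup F] [Module R F] (hF : FlatLeft R F)
    (p : P →ₗ[R] F) (hp : Function.Surjective p)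
    {G Mo : Type u} [AddCommGroup G] [Module Rᵐᵒᵖ G] [AddCommGroup Mo] [Module Rᵐᵒᵖ Mo]
    (hG : FlatRight R G) (π : G →ₗ[Rᵐᵒᵖ] Mo) (hπ : Function.Surjective π) :
    Function.Injective
      (tmap (LinearMap.id : Mo →ₗ[Rᵐᵒᵖ] Mo) (LinearMap.ker p).subtype) := by
  have hexπ : Function.Exact (LinearMap.ker π).subtype π := exact_subtype_ker' π
  have hexp : Function.Exact (LinearMap.ker p).subtype p := exact_subtype_ker' p
  have hpK : p.comp (LinearMap.ker p).subtype = 0 := by ext k; exact k.2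
  have hπH : π.comp (LinearMap.ker π).subtype = 0 := by ext h; exact h.2
  rw [injective_iff_map_eq_zero]
  intro x hx
  obtain ⟨y, rfl⟩ := tmap_surjective π
    (LinearMap.id : ↥(LinearMap.ker p) →ₗ[R] ↥(LinearMap.ker p)) hπ Function.surjective_id x
  have hy'0 : tmap π (LinearMap.id : P →ₗ[R] P)
      (tmap (LinearMap.id : G →ₗ[Rᵐᵒᵖ] G) (LinearMap.ker p).subtype y) = 0 := by
    rw [tmap_comm]; exact hx
  obtain ⟨z, hz⟩ := tmap_exact_left (LinearMap.ker π).subtype π hexπ hπ _ hy'0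
  have h2 : tmap (LinearMap.id : G →ₗ[Rᵐᵒᵖ] G) p
      (tmap (LinearMap.id : G →ₗ[Rᵐᵒᵖ] G) (LinearMap.ker p).subtype y) = 0 := by
    rw [tmap_tmap, LinearMap.id_comp, hpK, tmap_zero_right]; rfl
  have h1 : tmap (LinearMap.ker π).subtype (LinearMap.id : F →ₗ[R] F)
      (tmap LinearMap.id p z) = 0 := by
    rw [tmap_comm, hz, h2]
  have hz0 : tmap (LinearMap.id : ↥(LinearMap.ker π) →ₗ[Rᵐᵒᵖ] ↥(LinearMap.ker π)) p z = 0 := by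
    apply hF ↥(LinearMap.ker π) G (LinearMap.ker π).subtype
      (Submodule.injective_subtype (LinearMap.ker π))
    rw [h1, map_zero]
  obtain ⟨w, hw⟩ := tmap_exact_right (LinearMap.ker p).subtype p hexp hp z hz0
  have h3 : tmap (LinearMap.id : G →ₗ[Rᵐᵒᵖ] G) (LinearMap.ker p).subtype
      (tmap (LinearMap.ker π).subtype LinearMap.id w)
      = tmap (LinearMap.id : G →ₗ[Rᵐᵒᵖ] G) (LinearMap.ker p).subtype y := by
    rw [← tmap_comm, hw, hz]
  have h4 : tmap (LinearMap.ker π).subtype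
      (LinearMap.id : ↥(LinearMap.ker p) →ₗ[R] ↥(LinearMap.ker p)) w = y :=
    hG ↥(LinearMap.ker p) P (LinearMap.ker p).subtype
      (Submodule.injective_subtype (LinearMap.ker p)) h3
  rw [← h4, tmap_tmap, LinearMap.id_comp, hπH, tmap_zero_left]
  rfl

theorem flat_tmap_ker_injective {P F : Type u} [AddCommGroup P] [Module R P]
    [AddCommGroup F] [Module R F] (hF : FlatLeft R F)
    (p : P →ₗ[R] F) (hp : Function.Surjective p)
    (Mo : Type u) [AddCommGroup Mo] [Module Rᵐᵒᵖ Mo] :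
    Function.Injective
      (tmap (LinearMap.id : Mo →ₗ[Rᵐᵒᵖ] Mo) (LinearMap.ker p).subtype) := by
  refine chase_aux hF p hp (flatRight_finsupp (ι := Mo))
    (Finsupp.linearCombination Rᵐᵒᵖ (id : Mo → Mo)) (fun m => ?_)
  exact ⟨Finsupp.single m 1, by rw [Finsupp.linearCombination_single, one_smul]; rfl⟩

end Chase

end NCT

section ExtensionPart

open NCT

variable (R : Type u) [Ring R] (S : Type u) [Ring S]
variable (E : Type u) [AddCommGroup E] [Module R E] [Module Sᵐᵒᵖ E] [SMulCommClass R Sᵐᵒᵖ E]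
variable (I : Type u) [AddCommGroup I] [Module R I]

/-- Left multiplication by `r : R` on the bimodule `E`, as an `Sᵐᵒᵖ`-linear map. -/
def lmulHom (r : R) : E →ₗ[Sᵐᵒᵖ] E where
  toFun e := r • e
  map_add' := smul_add r
  map_smul' s e := smul_comm r s e

lemma lmulHom_one : lmulHom R S E 1 = LinearMap.id := by
  ext e; exact one_smul R e

lemma lmulHom_mul (r r' : R) : lmulHom R S E (r * r') = (lmulHom R S E r).comp (lmulHom R S E r') := by
  ext e; exact mul_smul r r' e

lemma lmulHom_add (r r' : R) : lmulHom R S E (r + r') = lmulHom R S E r + lmulHom R S E r' := by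
  ext e; exact add_smul r r' e

lemma lmulHom_zero : lmulHom R S E 0 = 0 := by
  ext e; exact zero_smul R e

variable {S}

/-- The `R`-module structure on `E ⊗_S N` coming from the left `R`-action on `E`. -/
instance tensModule (N : Type u) [AddCommGroup N] [Module S N] : Module R (Tens S E N) where
  smul r x := tmap (lmulHom R S E r) LinearMap.id x
  one_smul x := by
    show tmap (lmulHom R S E 1) LinearMap.id x = x
    rw [lmulHom_one]; exact tmap_id_apply x
  mul_smul r r' x := by
    show tmap (lmulHom R S E (r * r')) LinearMap.id x
      = tmap (lmulHom R S E r) LinearMap.id (tmap (lmulHom R S E r') LinearMap.id x)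
    rw [tmap_tmap, LinearMap.id_comp, lmulHom_mul]
  smul_zero r := map_zero _
  smul_add r x y := map_add _ x y
  add_smul r r' x := by
    show tmap (lmulHom R S E (r + r')) LinearMap.id x
      = tmap (lmulHom R S E r) LinearMap.id x + tmap (lmulHom R S E r') LinearMap.id x
    rw [lmulHom_add, tmap_add_left]
    rfl
  zero_smul x := by
    show tmap (lmulHom R S E 0) LinearMap.id x = 0
    rw [lmulHom_zero, tmap_zero_left]; rfl

variable {R E I}

lemma rsmul_def {N : Type u} [AddCommGroup N] [Module S N] (r : R) (x : Tens S E N) :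
    r • x = tmap (lmulHom R S E r) LinearMap.id x := rfl

lemma rsmul_mk {N : Type u} [AddCommGroup N] [Module S N] (r : R) (e : E) (n : N) :
    r • (mk (e ⊗ₜ[ℤ] n) : Tens S E N) = mk ((r • e) ⊗ₜ[ℤ] n) := by
  rw [rsmul_def, tmap_mk]
  congr 1

variable (E I)

private def preToTensHom {N : Type u} [AddCommGroup N] [Module S N]
    (h : N →ₗ[S] (E →ₗ[R] I)) : E ⊗[ℤ] N →ₗ[ℤ] I :=
  TensorProduct.lift
    { toFun := fun e =>
        { toFun := fun n => h n e
          map_add' := fun n n' => by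
            show h (n + n') e = h n e + h n' e
            rw [map_add]; rfl
          map_smul' := fun z n => by
            show h (z • n) e = z • h n e
            rw [map_zsmul]; rfl }
      map_add' := fun e e' => by ext n; exact (h n).map_add e e'
      map_smul' := fun z e => by ext n; simp }

private lemma preToTensHom_tmul {N : Type u} [AddCommGroup N] [Module S N]
    (h : N →ₗ[S] (E →ₗ[R] I)) (e : E) (n : N) :
    preToTensHom E I h (e ⊗ₜ[ℤ] n) = h n e := rfl

private lemma preToTensHom_rel {N : Type u} [AddCommGroup N] [Module S N]
    (h : N →ₗ[S] (E →ₗ[R] I)) :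
    ∀ x ∈ NCT.rel S E N, (preToTensHom E I h).toAddMonoidHom x = 0 := by
  have hle : NCT.rel S E N ≤ (preToTensHom E I h).toAddMonoidHom.ker := by
    rw [NCT.rel, AddSubgroup.closure_le]
    rintro _ ⟨s, e, n, rfl⟩
    simp only [SetLike.mem_coe, AddMonoidHom.mem_ker, map_sub, LinearMap.toAddMonoidHom_coe]
    rw [preToTensHom_tmul, preToTensHom_tmul, h.map_smul, sub_eq_zero]
    rfl
  exact fun x hx => AddMonoidHom.mem_ker.mp (hle hx)

private def toTensHom {N : Type u} [AddCommGroup N] [Module S N]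
    (h : N →ₗ[S] (E →ₗ[R] I)) : Tens S E N →ₗ[R] I where
  toFun := QuotientAddGroup.lift _ (preToTensHom E I h).toAddMonoidHom
    (fun x hx => AddMonoidHom.mem_ker.mpr (preToTensHom_rel E I h x hx))
  map_add' x y := map_add _ x y
  map_smul' r x := by
    obtain ⟨t, rfl⟩ := mk_surjective x
    simp only [RingHom.id_apply]
    induction t using TensorProduct.induction_on with
    | zero => rw [map_zero, smul_zero]; erw [map_zero]; rw [smul_zero]
    | tmul e n =>
      rw [rsmul_mk]
      show preToTensHom E I h ((r • e) ⊗ₜ[ℤ] n) = r • preToTensHom E I h (e ⊗ₜ[ℤ] n)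
      rw [preToTensHom_tmul, preToTensHom_tmul]
      exact (h n).map_smul r e
    | add a b ha hb =>
      rw [show (mk (a + b) : Tens S E N) = mk a + mk b from map_add _ a b, smul_add]
      erw [map_add, map_add]
      rw [ha, hb, smul_add]
      

private lemma toTensHom_mk_tmul {N : Type u} [AddCommGroup N] [Module S N]
    (h : N →ₗ[S] (E →ₗ[R] I)) (e : E) (n : N) :
    toTensHom E I h (mk (e ⊗ₜ[ℤ] n)) = h n e := rfl

private def ofTensHom {P0 : Type u} [AddCommGroup P0] [Module S P0]
    (g : Tens S E P0 →ₗ[R] I) : P0 →ₗ[S] (E →ₗ[R] I) where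
  toFun p :=
    { toFun := fun e => g (mk (e ⊗ₜ[ℤ] p))
      map_add' := fun e e' => by
        show g (mk ((e + e') ⊗ₜ[ℤ] p)) = g (mk (e ⊗ₜ[ℤ] p)) + g (mk (e' ⊗ₜ[ℤ] p))
        rw [show ((e + e') ⊗ₜ[ℤ] p) = e ⊗ₜ[ℤ] p + e' ⊗ₜ[ℤ] p from TensorProduct.add_tmul e e' p,
          map_add, map_add]
      map_smul' := fun r e => by
        show g (mk ((r • e) ⊗ₜ[ℤ] p)) = r • g (mk (e ⊗ₜ[ℤ] p))
        rw [← rsmul_mk, map_smul] }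
  map_add' p p' := by
    ext e
    show g (mk (e ⊗ₜ[ℤ] (p + p'))) = g (mk (e ⊗ₜ[ℤ] p)) + g (mk (e ⊗ₜ[ℤ] p'))
    rw [show (e ⊗ₜ[ℤ] (p + p')) = e ⊗ₜ[ℤ] p + e ⊗ₜ[ℤ] p' from TensorProduct.tmul_add e p p',
      map_add, map_add]
  map_smul' s p := by
    ext e
    show g (mk (e ⊗ₜ[ℤ] (s • p))) = g (mk ((MulOpposite.op s • e) ⊗ₜ[ℤ] p))
    rw [← mk_rel]

theorem extension_property (hI : Module.Injective R I)
    {P0 : Type u} [AddCommGroup P0] [Module S P0] (K : Submodule S P0)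
    (hinj : Function.Injective (tmap (LinearMap.id : E →ₗ[Sᵐᵒᵖ] E) K.subtype))
    (h : ↥K →ₗ[S] (E →ₗ[R] I)) :
    ∃ g : P0 →ₗ[S] (E →ₗ[R] I), ∀ k : K, g ↑k = h k := by
  let ι : Tens S E ↥K →ₗ[R] Tens S E P0 :=
    { toFun := tmap LinearMap.id K.subtype
      map_add' := fun x y => map_add _ x y
      map_smul' := fun r x => by
        simp only [RingHom.id_apply, rsmul_def]
        rw [tmap_tmap, tmap_tmap, LinearMap.id_comp, LinearMap.comp_id, LinearMap.id_comp,
          LinearMap.comp_id] }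
  have hιinj : Function.Injective ι := hinj
  obtain ⟨gt, hgt⟩ := hI.out ι hιinj (toTensHom E I h)
  refine ⟨ofTensHom E I gt, fun k => ?_⟩
  ext e
  show gt (mk (e ⊗ₜ[ℤ] (k : P0))) = h k e
  have h1 : ι (mk (e ⊗ₜ[ℤ] k)) = mk (e ⊗ₜ[ℤ] (k : P0)) := by
    show tmap LinearMap.id K.subtype (mk (e ⊗ₜ[ℤ] k)) = _
    rw [tmap_mk]
    congr 1
  rw [← h1, hgt]
  exact toTensHom_mk_tmul E I h e k

end ExtensionPart

/-- **`Hom_R(E, I)` is a cotorsion `S`-module.**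
Let `R` and `S` be rings, `E` an `R`-`S`-bimodule, and `I` an injective left `R`-module.
Then the left `S`-module `Hom_R(E, I)` is cotorsion, i.e. `Ext¹_S(F, Hom_R(E, I)) = 0`
for every flat left `S`-module `F`. -/
theorem hom_into_injective_is_cotorsion
    (R : Type u) [Ring R] (S : Type u) [Ring S]
    (E : Type u) [AddCommGroup E] [Module R E] [Module Sᵐᵒᵖ E] [SMulCommClass R Sᵐᵒᵖ E]
    (I : Type u) [AddCommGroup I] [Module R I] (hI : Module.Injective R I) :
    ∀ (F : Type u) [AddCommGroup F] [Module S F], NCT.FlatLeft S F →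
      Subsingleton (((Ext ℤ (ModuleCat.{u} S) 1).obj (op (ModuleCat.of S F))).obj
        (ModuleCat.of S (E →ₗ[R] I))) := by
  intro F _ _ hF
  obtain ⟨P⟩ := (HasProjectiveResolution.out (Z := ModuleCat.of S F))
  set C := ModuleCat.of S (E →ₗ[R] I) with hCdef
  suffices hz : Limits.IsZero (((Ext ℤ (ModuleCat.{u} S) 1).obj (op (ModuleCat.of S F))).obj C) by
    constructor
    intro a b
    have h0 : (𝟙 (((Ext ℤ (ModuleCat.{u} S) 1).obj (op (ModuleCat.of S F))).obj C))
        = 0 := hz.eq_of_src _ _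
    have ha : ∀ c : (((Ext ℤ (ModuleCat.{u} S) 1).obj (op (ModuleCat.of S F))).obj C), c = 0 := by
      intro c
      have h1 : (𝟙 (((Ext ℤ (ModuleCat.{u} S) 1).obj (op (ModuleCat.of S F))).obj C)) c
          = (0 : _ →ₗ[ℤ] _) c := by rw [h0]; rfl
      simpa using h1
    rw [ha a, ha b]
  refine Limits.IsZero.of_iso ?_ (P.isoExt 1 C)
  rw [← HomologicalComplex.exactAt_iff_isZero_homology]
  rw [HomologicalComplex.exactAt_iff' _ 0 1 2 (by simp) (by simp)]
  rw [ShortComplex.moduleCat_exact_iff]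
  intro x₂ hx₂
  change (P.complex.X 1 ⟶ C) at x₂
  have hx₂' : P.complex.d 2 1 ≫ x₂ = 0 := hx₂
  -- the augmentation map
  have hp : Function.Surjective (P.π.f 0) := by
    rw [← ModuleCat.epi_iff_surjective]
    infer_instance
  have hK : LinearMap.range (P.complex.d 1 0).hom = LinearMap.ker (P.π.f 0).hom :=
    by have := (ShortComplex.moduleCat_exact_iff_range_eq_ker _).mp P.exact₀; exact this
  have hrange : LinearMap.range (P.complex.d 2 1).hom = LinearMap.ker (P.complex.d 1 0).hom :=
    by have := (ShortComplex.moduleCat_exact_iff_range_eq_ker _).mp (P.exact_succ 0); exact this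
  -- flatness of the degree-zero object of the single complex
  have hF' : NCT.FlatLeft S
      ↥(((ChainComplex.single₀ (ModuleCat.{u} S)).obj (ModuleCat.of S F)).X 0) :=
    NCT.flatLeft_of_equiv
      (HomologicalComplex.singleObjXSelf (ComplexShape.down ℕ) 0
        (ModuleCat.of S F)).toLinearEquiv.symm hF
  have hinj0 : Function.Injective
      (NCT.tmap (LinearMap.id : E →ₗ[Sᵐᵒᵖ] E) (LinearMap.ker (P.π.f 0).hom).subtype) :=
    NCT.flat_tmap_ker_injective hF' (P.π.f 0).hom hp E
  have hinjK : Function.Injective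
      (NCT.tmap (LinearMap.id : E →ₗ[Sᵐᵒᵖ] E)
        (LinearMap.range (P.complex.d 1 0).hom).subtype) := by
    rw [hK]; exact hinj0
  -- factor x₂ through the image of d 1 0
  have hker : LinearMap.ker (P.complex.d 1 0).hom ≤ LinearMap.ker x₂.hom := by
    intro v hv
    rw [← hrange] at hv
    obtain ⟨u, rfl⟩ := hv
    show x₂ (P.complex.d 2 1 u) = 0
    have := congrArg (fun (φ : P.complex.X 2 ⟶ C) => φ u) hx₂'
    simpa using this
  let eqv := LinearMap.quotKerEquivRange (P.complex.d 1 0).hom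
  let h' : ↥(LinearMap.range (P.complex.d 1 0).hom) →ₗ[S] (E →ₗ[R] I) :=
    (Submodule.liftQ _ x₂.hom hker).comp (eqv.symm : _ →ₗ[S] _)
  have hh' : ∀ v : P.complex.X 1,
      h' ⟨P.complex.d 1 0 v, LinearMap.mem_range_self _ v⟩ = x₂ v := by
    intro v
    have e1 : (⟨P.complex.d 1 0 v, LinearMap.mem_range_self _ v⟩ :
        ↥(LinearMap.range (P.complex.d 1 0).hom))
        = eqv (Submodule.Quotient.mk v) :=
      Subtype.ext (LinearMap.quotKerEquivRange_apply_mk _ v).symm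
    rw [e1]
    show (Submodule.liftQ _ x₂.hom hker) (eqv.symm (eqv (Submodule.Quotient.mk v)))
      = x₂ v
    rw [LinearEquiv.symm_apply_apply, Submodule.liftQ_apply]
  obtain ⟨g, hg⟩ := extension_property E I hI (LinearMap.range (P.complex.d 1 0).hom) hinjK h'
  refine ⟨(ModuleCat.ofHom g : P.complex.X 0 ⟶ C), ?_⟩
  show P.complex.d 1 0 ≫ (ModuleCat.ofHom g : P.complex.X 0 ⟶ C) = x₂
  refine ModuleCat.hom_ext (LinearMap.ext fun v => ?_)
  show g (P.complex.d 1 0 v) = x₂ v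
  rw [← hh' v]
  exact hg ⟨P.complex.d 1 0 v, LinearMap.mem_range_self _ v⟩
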